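/- (Theorem 2, part II.) Suppose the series S = Σ_{j=0}^∞ ω(j)·c_j converges. Then the truncations L(N, t̄) = Σ_{j=0}^{N} ω(j)·c_j + (1 − Σ_{j=0}^{N} ω(j))·c_{N+1} converge to S as the truncation horizon grows: lim_{N→∞} L(N, t̄) = S. -/

import Mathlib

open Matrix Filter

lemma aux_trace_nonneg {m : ℕ} {M : Matrix (Fin m) (Fin m) ℝ} (h : M.PosSemidef) :
    0 ≤ M.trace := by
  rw [Matrix.trace]
  refine Finset.sum_nonneg fun i _ => ?_
  exact h.diag_nonneg

lemma aux_trace_mono {m : ℕ} {X Y : Matrix (Fin m) (Fin m) ℝ} (h : (Y - X).PosSemidef) :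
    X.trace ≤ Y.trace := by
  have := aux_trace_nonneg h
  rw [Matrix.trace_sub] at this
  linarith

lemma aux_f_psd {m : ℕ} (A Q : Matrix (Fin m) (Fin m) ℝ) (hQ : Q.PosSemidef)
    {X : Matrix (Fin m) (Fin m) ℝ} (hX : X.PosSemidef) :
    (A * X * Aᵀ + Q).PosSemidef := by
  have h1 : (A * X * Aᴴ).PosSemidef := hX.mul_mul_conjTranspose_same A
  have h2 : Aᴴ = Aᵀ := by simp
  rw [h2] at h1
  exact h1.add hQ

set_option maxHeartbeats 2000000 in
/-- Theorem 2, part II: the truncations `L(N, t̄)` converge to the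
averaged expected error covariance as the truncation horizon grows. -/
theorem truncation_tendsto
    (lam lam_e : ℝ) (hlam0 : 0 < lam) (hlam1 : lam < 1)
    (hle0 : 0 < lam_e) (hle1 : lam_e < 1)
    (tbar : ℕ)
    (φ : ℕ → ℝ)
    (hφ0 : φ 0 = lam * lam_e / (lam * (tbar : ℝ) + 1))
    (hφ1 : ∀ j, j < tbar → φ (j + 1) = (1 - lam) * (1 - lam_e) * φ j)
    (hφ2 : ∀ j, tbar ≤ j → φ (j + 1) =
      (1 - lam) * (1 - lam_e) * φ j + lam * (1 - lam_e) * φ (j - tbar))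
    (ω : ℕ → ℝ)
    (hω0 : ω 0 = lam_e / (lam * (tbar : ℝ) + 1))
    (hω1 : ∀ j, 1 ≤ j → j ≤ tbar →
      ω j = (1 - lam) * (1 - lam_e) * ω (j - 1) + φ 0)
    (hω2 : ∀ j, tbar + 1 ≤ j →
      ω j = (1 - lam) * (1 - lam_e) * ω (j - 1) + φ 0
        - lam_e * ∑ l ∈ Finset.range (j - tbar), φ l)
    (n : ℕ) (hn : 0 < n)
    (A Q Pbar : Matrix (Fin n) (Fin n) ℝ)
    (hQ : Q.PosSemidef) (hP : Pbar.PosSemidef)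
    (hloewner : (A * Pbar * Aᵀ + Q - Pbar).PosSemidef)
    (c : ℕ → ℝ) (hc : ∀ j, c j = ((fun X => A * X * Aᵀ + Q)^[j] Pbar).trace)
    (hsum : Summable fun j : ℕ => ω j * c j) :
    Tendsto
      (fun N : ℕ =>
        (∑ j ∈ Finset.range (N + 1), ω j * c j)
          + (1 - ∑ j ∈ Finset.range (N + 1), ω j) * c (N + 1))
      atTop (nhds (∑' j : ℕ, ω j * c j)) := by
  -- abbreviations
  set α : ℝ := (1 - lam) * (1 - lam_e) with hα_def
  set β : ℝ := lam * (1 - lam_e) with hβ_def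

  -- basic positivity
  have hα0 : 0 < α := by rw [hα_def]; nlinarith
  have hβ0 : 0 < β := by rw [hβ_def]; nlinarith
  have hαβ : α + β = 1 - lam_e := by rw [hα_def, hβ_def]; ring
  have hαβ1 : α + β < 1 := by rw [hαβ]; linarith
  have hα1 : α < 1 := by linarith
  have hD0 : (0:ℝ) < lam * (tbar : ℝ) + 1 := by positivity
  have hφ0pos : 0 < φ 0 := by rw [hφ0]; positivity
  -- the shifted companion sequence
  set ψ : ℕ → ℝ := fun j => if tbar ≤ j then φ (j - tbar) else 0 with hψ_def
  have hrec : ∀ j, φ (j + 1) = α * φ j + β * ψ j := by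
    intro j
    by_cases h : tbar ≤ j
    · rw [hφ2 j h, hψ_def]; simp [h]
    · push_neg at h
      rw [hφ1 j h, hψ_def]; simp [Nat.not_le.mpr h]
  have hφnonneg : ∀ j, 0 ≤ φ j := by
    intro j
    induction j using Nat.strong_induction_on with
    | _ j ih =>
      match j with
      | 0 => exact hφ0pos.le
      | Nat.succ j =>
        rw [hrec j]
        have h1 : 0 ≤ φ j := ih j (Nat.lt_succ_self j)
        have h2 : 0 ≤ ψ j := by
          rw [hψ_def]
          by_cases h : tbar ≤ j
          · simp only [h, if_true]
            exact ih (j - tbar) (Nat.lt_succ_of_le (Nat.sub_le j tbar))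
          · simp [h]
        positivity
  -- geometric bound
  set q : ℝ := (1 + (α + β)) / 2 with hq_def
  have hq0 : 0 < q := by rw [hq_def]; linarith
  have hq1 : q < 1 := by rw [hq_def]; linarith
  have hqαβ : α + β < q := by rw [hq_def]; linarith
  set r : ℝ := q ^ ((tbar + 1 : ℝ)⁻¹) with hr_def
  have hr0 : 0 < r := Real.rpow_pos_of_pos hq0 _
  have hr1 : r < 1 := by
    rw [hr_def]
    apply Real.rpow_lt_one hq0.le hq1
    positivity
  have hrpow : r ^ (tbar + 1) = q := by
    rw [hr_def, ← Real.rpow_natCast (q ^ ((tbar + 1 : ℝ)⁻¹)) (tbar + 1),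
      ← Real.rpow_mul hq0.le]
    rw [show (((tbar + 1 : ℕ) : ℝ)) = (tbar + 1 : ℝ) by push_cast; ring]
    rw [inv_mul_cancel₀ (by positivity : (tbar + 1 : ℝ) ≠ 0), Real.rpow_one]
  have hrq : q ≤ r := by
    calc q = r ^ (tbar + 1) := hrpow.symm
    _ ≤ r ^ 1 := pow_le_pow_of_le_one hr0.le hr1.le (by omega)
    _ = r := pow_one r
  have hαr : α < r := lt_of_lt_of_le (by linarith) hrq
  have hkey : α * r ^ tbar + β ≤ r ^ (tbar + 1) := by
    rw [hrpow]
    have : r ^ tbar ≤ 1 := pow_le_one₀ hr0.le hr1.le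
    nlinarith
  have hbound : ∀ j, φ j ≤ φ 0 * r ^ j := by
    intro j
    induction j using Nat.strong_induction_on with
    | _ j ih =>
      match j with
      | 0 => simp
      | Nat.succ j =>
        rw [hrec j]
        by_cases h : tbar ≤ j
        · have hψj : ψ j = φ (j - tbar) := by rw [hψ_def]; simp [h]
          rw [hψj]
          have h1 : φ j ≤ φ 0 * r ^ j := ih j (Nat.lt_succ_self j)
          have h2 : φ (j - tbar) ≤ φ 0 * r ^ (j - tbar) :=
            ih (j - tbar) (Nat.lt_succ_of_le (Nat.sub_le j tbar))
          have hj : j = tbar + (j - tbar) := by omega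
          have hsplit : r ^ j = r ^ tbar * r ^ (j - tbar) := by
            rw [← pow_add, Nat.add_sub_cancel' h]
          calc α * φ j + β * φ (j - tbar)
              ≤ α * (φ 0 * r ^ j) + β * (φ 0 * r ^ (j - tbar)) :=
                add_le_add (mul_le_mul_of_nonneg_left h1 hα0.le)
                  (mul_le_mul_of_nonneg_left h2 hβ0.le)
            _ = φ 0 * r ^ (j - tbar) * (α * r ^ tbar + β) := by
                rw [hsplit]; ring
            _ ≤ φ 0 * r ^ (j - tbar) * r ^ (tbar + 1) :=
                mul_le_mul_of_nonneg_left hkey (by positivity)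
            _ = φ 0 * r ^ (j + 1) := by
                rw [show j + 1 = (j - tbar) + (tbar + 1) by omega, pow_add]; ring
        · have hψj : ψ j = 0 := by rw [hψ_def]; simp [h]
          rw [hψj]
          have h1 : φ j ≤ φ 0 * r ^ j := ih j (Nat.lt_succ_self j)
          have hrj : (0:ℝ) < r ^ j := by positivity
          calc α * φ j + β * 0 = α * φ j := by ring
            _ ≤ α * (φ 0 * r ^ j) := mul_le_mul_of_nonneg_left h1 hα0.le
            _ ≤ r * (φ 0 * r ^ j) := mul_le_mul_of_nonneg_right hαr.le (by positivity)
            _ = φ 0 * r ^ (j + 1) := by ring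
  -- summability of φ
  have hgeo : Summable (fun j : ℕ => φ 0 * r ^ j) :=
    (summable_geometric_of_lt_one hr0.le hr1).mul_left _
  have hφsum : Summable φ := Summable.of_nonneg_of_le hφnonneg hbound hgeo
  have hφshift : ∀ k, Summable (fun l => φ (l + k)) := fun k =>
    (summable_nat_add_iff k).mpr hφsum
  have hψsum : Summable ψ := by
    refine (summable_nat_add_iff tbar).mp ?_
    have : (fun l => ψ (l + tbar)) = φ := by
      funext l; rw [hψ_def]; simp
    rw [this]; exact hφsum
  have hψshift : ∀ k, Summable (fun l => ψ (l + k)) := fun k =>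
    (summable_nat_add_iff k).mpr hψsum
  set Φ : ℝ := ∑' j, φ j with hΦ_def
  have hΦnonneg : 0 ≤ Φ := tsum_nonneg hφnonneg
  -- tail sums
  set T : ℕ → ℝ := fun m => ∑' l, φ (l + m) with hT_def
  have hT0 : T 0 = Φ := by rw [hT_def]; simp [hΦ_def]
  have hTnonneg : ∀ m, 0 ≤ T m := fun m => tsum_nonneg (fun l => hφnonneg _)
  have hTpartial : ∀ m, (∑ l ∈ Finset.range m, φ l) + T m = Φ := fun m =>
    Summable.sum_add_tsum_nat_add m hφsum
  have hTle : ∀ m, T m ≤ (φ 0 * (1 - r)⁻¹) * r ^ m := by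
    intro m
    have h1 : T m ≤ ∑' l, φ 0 * r ^ (l + m) := by
      refine Summable.tsum_le_tsum (fun l => hbound (l + m)) (hφshift m) ?_
      exact (summable_nat_add_iff (f := fun l => φ 0 * r ^ l) m).mpr hgeo
    calc T m ≤ ∑' l, φ 0 * r ^ (l + m) := h1
      _ = (φ 0 * (1 - r)⁻¹) * r ^ m := by
          rw [show (fun l => φ 0 * r ^ (l + m)) = (fun l => (φ 0 * r ^ m) * r ^ l) by
            funext l; rw [pow_add]; ring]
          rw [tsum_mul_left, tsum_geometric_of_lt_one hr0.le hr1]; ring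
  have hTsum : Summable T := by
    refine Summable.of_nonneg_of_le hTnonneg hTle ?_
    exact (summable_geometric_of_lt_one hr0.le hr1).mul_left _
  -- V, the tail sums of ψ
  set V : ℕ → ℝ := fun m => ∑' l, ψ (l + m) with hV_def
  have hVshift : ∀ j, V (j + tbar) = T j := by
    intro j
    rw [hV_def, hT_def]
    refine tsum_congr fun l => ?_
    simp only [hψ_def]
    rw [if_pos (by omega : tbar ≤ l + (j + tbar))]
    congr 1; omega
  have hVlt : ∀ j, j < tbar → V j = Φ := by
    intro j hj
    simp only [hV_def]
    have hs := Summable.sum_add_tsum_nat_add (f := fun l => ψ (l + j)) (tbar - j) (hψshift j)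
    have hzero : (∑ i ∈ Finset.range (tbar - j), ψ (i + j)) = 0 := by
      refine Finset.sum_eq_zero fun i hi => ?_
      simp only [Finset.mem_range] at hi
      simp only [hψ_def]
      rw [if_neg (by omega)]
    rw [hzero, zero_add] at hs
    rw [← hs]
    refine tsum_congr fun i => ?_
    simp only [hψ_def]
    rw [if_pos (by omega : tbar ≤ i + (tbar - j) + j)]
    congr 1; omega
  -- pointwise recursion for T
  have hTrec : ∀ j, T (j + 1) = α * T j + β * V j := by
    intro j
    have h1 : T (j + 1) = ∑' l, φ ((l + j) + 1) := by
      rw [hT_def]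
      exact tsum_congr fun l => rfl
    rw [h1]
    have h2 : (fun l => φ ((l + j) + 1)) = fun l => α * φ (l + j) + β * ψ (l + j) := by
      funext l; exact hrec (l + j)
    rw [h2, Summable.tsum_add ((hφshift j).mul_left α) ((hψshift j).mul_left β),
      tsum_mul_left, tsum_mul_left]
  -- Φ equation
  have hΦeq : lam_e * Φ = φ 0 := by
    have h1 : Φ = φ 0 + ∑' j, φ (j + 1) := Summable.tsum_eq_zero_add hφsum
    have h2 : (fun j => φ (j + 1)) = fun j => α * φ j + β * ψ j := by
      funext j; exact hrec j
    have h3 : ∑' j, ψ j = Φ := by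
      have hs := Summable.sum_add_tsum_nat_add (f := ψ) tbar hψsum
      have hzero : (∑ i ∈ Finset.range tbar, ψ i) = 0 := by
        refine Finset.sum_eq_zero fun i hi => ?_
        simp only [Finset.mem_range] at hi
        simp only [hψ_def]
        rw [if_neg (by omega)]
      rw [hzero, zero_add] at hs
      rw [← hs]
      refine tsum_congr fun i => ?_
      simp only [hψ_def]
      rw [if_pos (by omega : tbar ≤ i + tbar)]
      congr 1; omega
    rw [h2] at h1
    rw [Summable.tsum_add (hφsum.mul_left α) (hψsum.mul_left β), tsum_mul_left, tsum_mul_left,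
      h3] at h1
    have : lam_e = 1 - α - β := by rw [hα_def, hβ_def]; ring
    rw [this]; linear_combination h1
  have hΦval : Φ = lam / (lam * (tbar : ℝ) + 1) := by
    have h := hΦeq
    rw [hφ0] at h
    apply mul_left_cancel₀ (ne_of_gt hle0)
    rw [h]; ring
  -- U = sum of T
  set U : ℝ := ∑' m, T m with hU_def
  have hUnonneg : 0 ≤ U := tsum_nonneg hTnonneg
  have hVsum : Summable V := by
    refine (summable_nat_add_iff tbar).mp ?_
    have : (fun j => V (j + tbar)) = T := by funext j; exact hVshift j
    rw [this]; exact hTsum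
  have hTsucc_sum : Summable (fun j => T (j + 1)) := (summable_nat_add_iff 1).mpr hTsum
  have hVtsum : ∑' m, V m = (tbar : ℝ) * Φ + U := by
    have hs := Summable.sum_add_tsum_nat_add (f := V) tbar hVsum
    have h1 : (∑ i ∈ Finset.range tbar, V i) = (tbar : ℝ) * Φ := by
      rw [Finset.sum_congr rfl (fun i hi => hVlt i (Finset.mem_range.mp hi))]
      simp [mul_comm]
    have h2 : (fun j => V (j + tbar)) = T := by funext j; exact hVshift j
    rw [h1, h2] at hs
    rw [← hs, hU_def]
  have hUeq : lam_e * U = (1 + β * tbar) * Φ := by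
    have h1 : U = T 0 + ∑' j, T (j + 1) := Summable.tsum_eq_zero_add hTsum
    have h2 : (fun j => T (j + 1)) = fun j => α * T j + β * V j := by
      funext j; exact hTrec j
    rw [h2, Summable.tsum_add (hTsum.mul_left α) (hVsum.mul_left β), tsum_mul_left,
      tsum_mul_left, hT0, hVtsum] at h1
    have : lam_e = 1 - α - β := by rw [hα_def, hβ_def]; ring
    rw [this]
    linear_combination h1
  -- unified ω recursion
  have hωrec : ∀ j, ω (j + 1) = α * ω j + lam_e * T (j + 1 - tbar) := by
    intro j
    by_cases h : j + 1 ≤ tbar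
    · have := hω1 (j + 1) (by omega) h
      simp only [Nat.add_sub_cancel] at this
      rw [this]
      have : j + 1 - tbar = 0 := by omega
      rw [this, hT0, hΦeq]
    · have := hω2 (j + 1) (by omega)
      simp only [Nat.add_sub_cancel] at this
      rw [this]
      have hp := hTpartial (j + 1 - tbar)
      have : lam_e * T (j + 1 - tbar)
          = φ 0 - lam_e * ∑ l ∈ Finset.range (j + 1 - tbar), φ l := by
        rw [← hΦeq]; linear_combination lam_e * hp
      linarith [this]
  have hωnonneg : ∀ j, 0 ≤ ω j := by
    intro j
    induction j with
    | zero => rw [hω0]; positivity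
    | succ j ih =>
      rw [hωrec j]
      have := hTnonneg (j + 1 - tbar)
      positivity
  -- summability of ω
  have hTtail : ∑' j, T (j + 1) = U - Φ := by
    have h1 : U = T 0 + ∑' j, T (j + 1) := Summable.tsum_eq_zero_add hTsum
    rw [hT0] at h1; linarith
  have hTm_le : ∀ m, T m ≤ Φ := by
    intro m
    have := hTpartial m
    have hs : 0 ≤ ∑ l ∈ Finset.range m, φ l := Finset.sum_nonneg fun l _ => hφnonneg l
    linarith
  have hsum_T_bound : ∀ N, (∑ j ∈ Finset.range N, T (j + 1 - tbar))
      ≤ (tbar : ℝ) * Φ + U := by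
    intro N
    rcases le_or_gt N tbar with hN | hN
    · have h1 : (∑ j ∈ Finset.range N, T (j + 1 - tbar)) = (N : ℝ) * Φ := by
        rw [Finset.sum_congr rfl (fun j hj => by
          have : j + 1 - tbar = 0 := by
            simp only [Finset.mem_range] at hj; omega
          rw [this, hT0])]
        simp [mul_comm]
      rw [h1]
      have : (N : ℝ) ≤ (tbar : ℝ) := by exact_mod_cast hN
      nlinarith
    · obtain ⟨K, hK⟩ : ∃ K, N = tbar + K := ⟨N - tbar, by omega⟩
      subst hK
      rw [Finset.sum_range_add]
      have h1 : (∑ j ∈ Finset.range tbar, T (j + 1 - tbar)) = (tbar : ℝ) * Φ := by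
        rw [Finset.sum_congr rfl (fun j hj => by
          have : j + 1 - tbar = 0 := by
            simp only [Finset.mem_range] at hj; omega
          rw [this, hT0])]
        simp [mul_comm]
      have h2 : (∑ j ∈ Finset.range K, T (tbar + j + 1 - tbar))
          = ∑ j ∈ Finset.range K, T (j + 1) := by
        refine Finset.sum_congr rfl fun j _ => ?_
        congr 1; omega
      rw [h1, h2]
      have h3 : (∑ j ∈ Finset.range K, T (j + 1)) ≤ ∑' j, T (j + 1) := by
        exact Summable.sum_le_tsum (Finset.range K) (fun i _ => hTnonneg _) hTsucc_sum
      rw [hTtail] at h3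
      linarith
  have hωpartial_le : ∀ N, (∑ j ∈ Finset.range N, ω j)
      ≤ (ω 0 + lam_e * ((tbar : ℝ) * Φ + U)) / (1 - α) := by
    have hω0' : 0 ≤ ω 0 := hωnonneg 0
    have h1α : (0:ℝ) < 1 - α := by linarith
    intro N
    induction N with
    | zero => simp; positivity
    | succ N ih =>
      rw [Finset.sum_range_succ']
      have h1 : (∑ j ∈ Finset.range N, ω (j + 1))
          = α * (∑ j ∈ Finset.range N, ω j)
            + lam_e * (∑ j ∈ Finset.range N, T (j + 1 - tbar)) := by
        rw [Finset.sum_congr rfl (fun j _ => hωrec j), Finset.sum_add_distrib,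
          Finset.mul_sum, Finset.mul_sum]
      rw [h1]
      have h2 := hsum_T_bound N
      have h3 : (0 : ℝ) ≤ ∑ j ∈ Finset.range N, ω j :=
        Finset.sum_nonneg fun j _ => hωnonneg j
      have key : α * (∑ j ∈ Finset.range N, ω j)
            ≤ α * ((ω 0 + lam_e * ((tbar : ℝ) * Φ + U)) / (1 - α)) := by
        exact mul_le_mul_of_nonneg_left ih hα0.le
      have expand : α * ((ω 0 + lam_e * ((tbar : ℝ) * Φ + U)) / (1 - α)) + (ω 0 + lam_e * ((tbar : ℝ) * Φ + U))
          = (ω 0 + lam_e * ((tbar : ℝ) * Φ + U)) / (1 - α) := by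
        field_simp
        ring
      nlinarith [mul_le_mul_of_nonneg_left h2 hle0.le]
  have hωsum : Summable ω :=
    summable_of_sum_range_le hωnonneg hωpartial_le
  -- the total sum of ω is 1
  set Ω : ℝ := ∑' j, ω j with hΩ_def
  have hGsum : Summable (fun j => T (j + 1 - tbar)) := by
    refine (summable_nat_add_iff tbar).mp ?_
    have : (fun j => T (j + tbar + 1 - tbar)) = fun j => T (j + 1) := by
      funext j; congr 1; omega
    rw [this]; exact hTsucc_sum
  have hGtsum : ∑' j, T (j + 1 - tbar) = (tbar : ℝ) * Φ + (U - Φ) := by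
    have hs := Summable.sum_add_tsum_nat_add (f := fun j => T (j + 1 - tbar)) tbar hGsum
    have h1 : (∑ i ∈ Finset.range tbar, T (i + 1 - tbar)) = (tbar : ℝ) * Φ := by
      rw [Finset.sum_congr rfl (fun j hj => by
        have : j + 1 - tbar = 0 := by
          simp only [Finset.mem_range] at hj; omega
        rw [this, hT0])]
      simp [mul_comm]
    have h2 : (fun i => T (i + tbar + 1 - tbar)) = fun i => T (i + 1) := by
      funext i; congr 1; omega
    rw [h1, h2, hTtail] at hs
    linarith
  have hΩeq : Ω = ω 0 + α * Ω + lam_e * ((tbar : ℝ) * Φ + (U - Φ)) := by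
    have h1 : Ω = ω 0 + ∑' j, ω (j + 1) := Summable.tsum_eq_zero_add hωsum
    have h2 : (fun j => ω (j + 1)) = fun j => α * ω j + lam_e * T (j + 1 - tbar) := by
      funext j; exact hωrec j
    rw [h2, Summable.tsum_add (hωsum.mul_left α) (hGsum.mul_left lam_e), tsum_mul_left,
      tsum_mul_left, hGtsum] at h1
    rw [← hΩ_def] at h1
    linarith [h1]
  have hΩ1 : Ω = 1 := by
    have h1α : (0:ℝ) < 1 - α := by linarith
    have hle0' : lam_e ≠ 0 := ne_of_gt hle0
    -- derive value of U
    have hUval : U = (1 + β * (tbar : ℝ)) * Φ / lam_e := by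
      field_simp at hUeq ⊢
      linarith [hUeq]
    have : Ω * (1 - α) = ω 0 + lam_e * ((tbar : ℝ) * Φ + (U - Φ)) := by
      linear_combination hΩeq
    have hrhs : ω 0 + lam_e * ((tbar : ℝ) * Φ + (U - Φ)) = 1 - α := by
      rw [hUval, hΦval, hω0, hβ_def, hα_def]
      field_simp
      ring
    rw [hrhs] at this
    have := mul_right_cancel₀ (ne_of_gt h1α) (by linarith [this] : Ω * (1 - α) = 1 * (1 - α))
    exact this
  -- properties of c
  have hpsd : ∀ j, ((fun X => A * X * Aᵀ + Q)^[j] Pbar).PosSemidef := by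
    intro j
    induction j with
    | zero => simpa using hP
    | succ j ih =>
      rw [Function.iterate_succ_apply']
      exact aux_f_psd A Q hQ ih
  have hcnonneg : ∀ j, 0 ≤ c j := by
    intro j; rw [hc j]; exact aux_trace_nonneg (hpsd j)
  have hkeystep : ∀ X Y : Matrix (Fin n) (Fin n) ℝ, (Y - X).PosSemidef →
      ((A * Y * Aᵀ + Q) - (A * X * Aᵀ + Q)).PosSemidef := by
    intro X Y h
    have heq : (A * Y * Aᵀ + Q) - (A * X * Aᵀ + Q) = A * (Y - X) * Aᵀ := by
      noncomm_ring
    rw [heq]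
    have h1 : (A * (Y - X) * Aᴴ).PosSemidef := h.mul_mul_conjTranspose_same A
    have h2 : Aᴴ = Aᵀ := by simp
    rwa [h2] at h1
  have hdiffpsd : ∀ j, ((fun X => A * X * Aᵀ + Q)^[j + 1] Pbar
      - (fun X => A * X * Aᵀ + Q)^[j] Pbar).PosSemidef := by
    intro j
    induction j with
    | zero => simpa using hloewner
    | succ j ih =>
      have hg : ∀ k, (fun X => A * X * Aᵀ + Q)^[k + 1] Pbar
          = A * ((fun X => A * X * Aᵀ + Q)^[k] Pbar) * Aᵀ + Q := by
        intro k; rw [Function.iterate_succ_apply']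
      rw [hg j] at ih
      rw [hg (j + 1), hg j]
      exact hkeystep _ _ ih
  have hcmono : Monotone c := by
    apply monotone_nat_of_le_succ
    intro j
    rw [hc j, hc (j + 1)]
    exact aux_trace_mono (hdiffpsd j)
  -- final convergence
  have hterm1 : Tendsto (fun N : ℕ => ∑ j ∈ Finset.range (N + 1), ω j * c j)
      atTop (nhds (∑' j, ω j * c j)) := by
    have := hsum.hasSum.tendsto_sum_nat
    exact this.comp (tendsto_add_atTop_nat 1)
  have htail_eq : ∀ N : ℕ, 1 - (∑ j ∈ Finset.range (N + 1), ω j)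
      = ∑' j, ω (j + (N + 1)) := by
    intro N
    have := Summable.sum_add_tsum_nat_add (f := ω) (N + 1) hωsum
    rw [← hΩ_def] at this
    rw [← hΩ1]
    linarith
  have hωcshift : ∀ N : ℕ, Summable (fun j => ω (j + (N + 1)) * c (j + (N + 1))) :=
    fun N => (summable_nat_add_iff (N + 1)).mpr hsum
  have hωshift : ∀ N : ℕ, Summable (fun j => ω (j + (N + 1))) :=
    fun N => (summable_nat_add_iff (N + 1)).mpr hωsum
  have hterm2 : Tendsto (fun N : ℕ =>
      (1 - ∑ j ∈ Finset.range (N + 1), ω j) * c (N + 1)) atTop (nhds 0) := by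
    apply squeeze_zero (g := fun N => ∑' j, ω (j + (N + 1)) * c (j + (N + 1)))
    · intro N
      rw [htail_eq N]
      have h1 : 0 ≤ ∑' j, ω (j + (N + 1)) := tsum_nonneg fun j => hωnonneg _
      exact mul_nonneg h1 (hcnonneg _)
    · intro N
      rw [htail_eq N]
      have h1 : (∑' j, ω (j + (N + 1))) * c (N + 1)
          = ∑' j, ω (j + (N + 1)) * c (N + 1) := by
        rw [tsum_mul_right]
      rw [h1]
      refine Summable.tsum_le_tsum (fun j => ?_) ((hωshift N).mul_right _) (hωcshift N)
      exact mul_le_mul_of_nonneg_left (hcmono (by omega : N + 1 ≤ j + (N + 1)))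
        (hωnonneg _)
    · have := tendsto_sum_nat_add (fun j => ω j * c j)
      exact this.comp (tendsto_add_atTop_nat 1)
  have := hterm1.add hterm2
  rw [add_zero] at this
  exact this
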